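/- The complex dimension of the subspace {f : Fin n × Fin n → ℂ | C_u f = D_u f} (the eigenspace of the Berezin transform I_u with eigenvalue 1) is at least 2n - 1. -/

import Mathlib

open Finset Matrix

/-- The symbol-to-operator map `C_u` as a complex-linear map. -/
noncomputable def CL {ι : Type*} [Fintype ι] (u : Matrix ι ι ℂ) :
    ((ι × ι) → ℂ) →ₗ[ℂ] Matrix ι ι ℂ where
  toFun f := fun k k' => ∑ l, u k l * f (k, l) * (starRingEnd ℂ) (u k' l)
  map_add' f g := by
    ext k k'
    change _ = (∑ l : ι, (_ : ℂ)) + (∑ l : ι, (_ : ℂ))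
    simp [mul_add, add_mul, Finset.sum_add_distrib]
  map_smul' c f := by
    ext k k'
    change _ = c * ∑ l, _
    simp only [Pi.smul_apply, smul_eq_mul, RingHom.id_apply, Matrix.smul_apply]
    rw [Finset.mul_sum]
    exact Finset.sum_congr rfl fun l _ => by ring

/-- The symbol-to-operator map `D_u` as a complex-linear map. -/
noncomputable def DL {ι : Type*} [Fintype ι] (u : Matrix ι ι ℂ) :
    ((ι × ι) → ℂ) →ₗ[ℂ] Matrix ι ι ℂ where
  toFun f := fun k k' => ∑ l, u k l * f (k', l) * (starRingEnd ℂ) (u k' l)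
  map_add' f g := by
    ext k k'
    change _ = (∑ l : ι, (_ : ℂ)) + (∑ l : ι, (_ : ℂ))
    simp [mul_add, add_mul, Finset.sum_add_distrib]
  map_smul' c f := by
    ext k k'
    change _ = c * ∑ l, _
    simp only [Pi.smul_apply, smul_eq_mul, RingHom.id_apply, Matrix.smul_apply]
    rw [Finset.mul_sum]
    exact Finset.sum_congr rfl fun l _ => by ring

/-- The map sending `(a, b)` to the function `(k, l) ↦ a k + b l`. -/
noncomputable def Phi (n : ℕ) :
    ((Fin n → ℂ) × (Fin n → ℂ)) →ₗ[ℂ] ((Fin n × Fin n) → ℂ) where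
  toFun p := fun kl => p.1 kl.1 + p.2 kl.2
  map_add' p q := by funext kl; simp; ring
  map_smul' c p := by funext kl; simp; ring

/-- the eigenvalue-1 eigenspace `{f | C_u f = D_u f}` of the Berezin transform
`I_u` has complex dimension at least `2n - 1`. -/
theorem stmt6 (n : ℕ) (hn : 1 ≤ n) (u : Matrix (Fin n) (Fin n) ℂ)
    (hu : u * uᴴ = 1) (hne : ∀ k l, u k l ≠ 0) :
    2 * n - 1 ≤ Module.finrank ℂ ↥(LinearMap.ker (CL u - DL u)) := by
  have z : Fin n := ⟨0, hn⟩
  -- range of Phi is contained in the kernel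
  have hrange : LinearMap.range (Phi n) ≤ LinearMap.ker (CL u - DL u) := by
    rintro f ⟨p, rfl⟩
    rw [LinearMap.mem_ker]
    funext k k'
    have hkk' : ∑ l, u k l * (starRingEnd ℂ) (u k' l) = (1 : Matrix (Fin n) (Fin n) ℂ) k k' := by
      rw [← hu, Matrix.mul_apply]
      simp [Matrix.conjTranspose_apply]
    simp only [LinearMap.sub_apply, Matrix.sub_apply, CL, DL, Phi, LinearMap.coe_mk,
      AddHom.coe_mk, Matrix.zero_apply]
    have : (∑ l, u k l * (p.1 k + p.2 l) * (starRingEnd ℂ) (u k' l))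
        - (∑ l, u k l * (p.1 k' + p.2 l) * (starRingEnd ℂ) (u k' l))
        = (p.1 k - p.1 k') * ∑ l, u k l * (starRingEnd ℂ) (u k' l) := by
      rw [← Finset.sum_sub_distrib, Finset.mul_sum]
      exact Finset.sum_congr rfl fun l _ => by ring
    refine Eq.trans this ?_; rw [hkk']
    by_cases h : k = k'
    · subst h; simp
    · simp [Matrix.one_apply_ne h]
  -- kernel of Phi has dimension ≤ 1
  have hker : Module.finrank ℂ ↥(LinearMap.ker (Phi n)) ≤ 1 := by
    have : Function.Injective
        ((LinearMap.proj z ∘ₗ LinearMap.fst ℂ (Fin n → ℂ) (Fin n → ℂ)) ∘ₗ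
          (LinearMap.ker (Phi n)).subtype) := by
      intro p q hpq
      have hp := LinearMap.mem_ker.mp p.2
      have hq := LinearMap.mem_ker.mp q.2
      have hp' : ∀ k l, (p : (Fin n → ℂ) × (Fin n → ℂ)).1 k + (p : (Fin n → ℂ) × (Fin n → ℂ)).2 l = 0 := by
        intro k l; exact congrFun hp (k, l)
      have hq' : ∀ k l, (q : (Fin n → ℂ) × (Fin n → ℂ)).1 k + (q : (Fin n → ℂ) × (Fin n → ℂ)).2 l = 0 := by
        intro k l; exact congrFun hq (k, l)
      have heq : (p : (Fin n → ℂ) × (Fin n → ℂ)).1 z = (q : (Fin n → ℂ) × (Fin n → ℂ)).1 z := hpq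
      apply Subtype.ext
      have h1 : ∀ k, (p : (Fin n → ℂ) × (Fin n → ℂ)).1 k = (q : (Fin n → ℂ) × (Fin n → ℂ)).1 k := by
        intro k
        have := hp' k z; have h2 := hp' z z; have h3 := hq' k z; have h4 := hq' z z
        have : (p : (Fin n → ℂ) × (Fin n → ℂ)).1 k = (p : (Fin n → ℂ) × (Fin n → ℂ)).1 z := by linear_combination this - h2
        have h5 : (q : (Fin n → ℂ) × (Fin n → ℂ)).1 k = (q : (Fin n → ℂ) × (Fin n → ℂ)).1 z := by linear_combination h3 - h4
        rw [this, h5, heq]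
      have h2 : ∀ l, (p : (Fin n → ℂ) × (Fin n → ℂ)).2 l = (q : (Fin n → ℂ) × (Fin n → ℂ)).2 l := by
        intro l
        have hp1 := hp' z l; have hq1 := hq' z l
        linear_combination hp1 - hq1 - (h1 z)
      exact Prod.ext (funext h1) (funext h2)
    calc Module.finrank ℂ ↥(LinearMap.ker (Phi n))
        ≤ Module.finrank ℂ ℂ := LinearMap.finrank_le_finrank_of_injective this
      _ = 1 := Module.finrank_self ℂ
  -- rank-nullity
  have hrn := LinearMap.finrank_range_add_finrank_ker (Phi n)
  have hdom : Module.finrank ℂ ((Fin n → ℂ) × (Fin n → ℂ)) = 2 * n := by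
    simp [Module.finrank_prod]; ring
  rw [hdom] at hrn
  have hle := Submodule.finrank_mono hrange
  omega
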